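/- Let G be a DAG over a finite node set V ∪ L (disjoint) and let G_V denote the latent projection of G onto V. Then for all pairwise disjoint A, B, C ⊆ V, A and C are d-separated by B in G if and only if A and C are m-separated by B in G_V. -/

import Mathlib

/-- The kind of a step along a path in a mixed graph: a forward directed edge,
a backward directed edge, or a bi-directed edge. -/
inductive StepKind : Type
  | fwd | bwd | bidir

/-- Whether a step has an arrowhead at its left endpoint. -/
def StepKind.headLeft : StepKind → Prop
  | .fwd => False
  | _ => True

/-- Whether a step has an arrowhead at its right endpoint. -/
def StepKind.headRight : StepKind → Prop
  | .bwd => False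
  | _ => True

/-- A directed mixed graph: directed edges `dir` and bi-directed edges `bi`. -/
structure MixedGraph (V : Type*) where
  dir : V → V → Prop
  bi : V → V → Prop

namespace MixedGraph

variable {V : Type*}

/-- Validity of a step of the given kind between `u` (left) and `v` (right). -/
def stepOK (G : MixedGraph V) (u v : V) : StepKind → Prop
  | .fwd => G.dir u v
  | .bwd => G.dir v u
  | .bidir => G.bi u v

/-- A path in a mixed graph: distinct vertices `verts 0, …, verts n` joined by
edges of the recorded kinds. -/
structure Path (G : MixedGraph V) where
  n : ℕ
  verts : Fin (n + 1) → V
  steps : Fin n → StepKind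
  inj : Function.Injective verts
  ok : ∀ i : Fin n, G.stepOK (verts i.castSucc) (verts i.succ) (steps i)

/-- A mixed graph is acyclic if there is no nontrivial directed cycle. -/
def Acyclic (G : MixedGraph V) : Prop := ∀ v, ¬ Relation.TransGen G.dir v v

/-- `v` is a descendant of `u` (every node is its own descendant). -/
def descends (G : MixedGraph V) (u v : V) : Prop := Relation.ReflTransGen G.dir u v

/-- Ancestors of a set of nodes (via directed edges; each node is its own ancestor). -/
def ancestorsOf (G : MixedGraph V) (S : Set V) : Set V :=
  {u | ∃ s ∈ S, Relation.ReflTransGen G.dir u s}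

/-- The interior vertex `verts j` (for `0 < j < n+1`, i.e. `j` regarded in `Fin n`
with `0 < j`) is a collider on the path: both adjacent edges have an arrowhead at it. -/
def IsCollider (G : MixedGraph V) (p : Path G) (j : Fin p.n) (_hj : 0 < j.val) : Prop :=
  (p.steps ⟨j.val - 1, lt_of_le_of_lt (Nat.sub_le _ _) j.isLt⟩).headRight ∧
    (p.steps j).headLeft

/-- A path is blocked by `B` if some interior non-collider lies in `B`, or some
interior collider has no descendant in `B`. -/
def Blocked (G : MixedGraph V) (p : Path G) (B : Set V) : Prop :=
  ∃ (j : Fin p.n) (hj : 0 < j.val),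
    (¬ G.IsCollider p j hj ∧ p.verts j.castSucc ∈ B) ∨
      (G.IsCollider p j hj ∧ ∀ w ∈ B, ¬ G.descends (p.verts j.castSucc) w)

/-- m-separation (d-separation when there are no bi-directed edges): every path
from `A` to `C` is blocked by `B`. -/
def MSep (G : MixedGraph V) (A C B : Set V) : Prop :=
  ∀ p : Path G, p.verts 0 ∈ A → p.verts (Fin.last p.n) ∈ C → G.Blocked p B

/-- Subgraph induced on a set `W` of vertices. -/
def restrict (G : MixedGraph V) (W : Set V) : MixedGraph V where
  dir u v := G.dir u v ∧ u ∈ W ∧ v ∈ W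
  bi u v := G.bi u v ∧ u ∈ W ∧ v ∈ W

/-- Two distinct nodes are collider-connected if some path between them has all
interior nodes colliders (adjacent nodes are collider-connected). This is the
adjacency of the augmented graph. -/
def collConn (G : MixedGraph V) (u v : V) : Prop :=
  u ≠ v ∧ ∃ p : Path G, p.verts 0 = u ∧ p.verts (Fin.last p.n) = v ∧
    ∀ (j : Fin p.n) (hj : 0 < j.val), G.IsCollider p j hj

end MixedGraph

/-- Separation in an undirected graph with adjacency `adj`: there is no walk from
`A` to `C` avoiding `B`. -/
def USep {V : Type*} (adj : V → V → Prop) (A C B : Set V) : Prop :=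
  ∀ a ∈ A, ∀ c ∈ C,
    ¬ Relation.ReflTransGen (fun u v => adj u v ∧ u ∉ B ∧ v ∉ B) a c

/-- Directed reachability through latent nodes only. -/
def thruL {V L : Type*} (G : MixedGraph (V ⊕ L)) : L → L → Prop :=
  Relation.ReflTransGen (fun a b : L => G.dir (Sum.inr a) (Sum.inr b))

/-- Latent projection of a DAG over `V ⊕ L` onto `V`: directed edge `v → w` iff
there is a directed path from `v` to `w` all of whose intermediate nodes are
latent; bi-directed edge `v ↔ w` iff some latent node has directed paths (through
latents) to both `v` and `w`. -/
def latentProj {V L : Type*} (G : MixedGraph (V ⊕ L)) : MixedGraph V where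
  dir v w := G.dir (Sum.inl v) (Sum.inl w) ∨
    ∃ a b : L, G.dir (Sum.inl v) (Sum.inr a) ∧ thruL G a b ∧ G.dir (Sum.inr b) (Sum.inl w)
  bi v w := ∃ u a b : L, thruL G u a ∧ G.dir (Sum.inr a) (Sum.inl v) ∧
    thruL G u b ∧ G.dir (Sum.inr b) (Sum.inl w)

-- ==================== development ====================
namespace DSP

open MixedGraph

variable {V : Type*}

@[simp] lemma headLeft_fwd : StepKind.fwd.headLeft = False := rfl
@[simp] lemma headLeft_bwd : StepKind.bwd.headLeft = True := rfl
@[simp] lemma headLeft_bidir : StepKind.bidir.headLeft = True := rfl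
@[simp] lemma headRight_fwd : StepKind.fwd.headRight = True := rfl
@[simp] lemma headRight_bwd : StepKind.bwd.headRight = False := rfl
@[simp] lemma headRight_bidir : StepKind.bidir.headRight = True := rfl

def coll (s t : StepKind) : Prop := s.headRight ∧ t.headLeft

@[simp] lemma coll_bwd_left (t : StepKind) : ¬ coll .bwd t := by simp [coll]
@[simp] lemma coll_fwd_right (s : StepKind) : ¬ coll s .fwd := by simp [coll]

lemma headLeft_of_ne_fwd {t : StepKind} (h : t ≠ .fwd) : t.headLeft := by
  cases t <;> simp_all
lemma ne_fwd_iff_not_headLeft? {t : StepKind} (h : ¬ t.headLeft) : t = .fwd := by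
  cases t <;> simp_all

def intOK (G : MixedGraph V) (B : Set V) (s t : StepKind) (v : V) : Prop :=
  (coll s t → ∃ b ∈ B, G.descends v b) ∧ (¬ coll s t → v ∉ B)

lemma intOK_congr {G : MixedGraph V} {B : Set V} {s t s' t' : StepKind} {v : V}
    (h : coll s t ↔ coll s' t') : intOK G B s t v → intOK G B s' t' v := by
  intro ⟨h1, h2⟩; exact ⟨fun hc => h1 (h.2 hc), fun hc => h2 (fun hc' => hc (h.1 hc'))⟩

lemma intOK_of_notmem {G : MixedGraph V} {B : Set V} {t : StepKind} {v : V}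
    (hv : v ∉ B) : intOK G B .bwd t v := ⟨fun hc => absurd hc (coll_bwd_left t), fun _ => hv⟩

lemma intOK_fwd_of_notmem {G : MixedGraph V} {B : Set V} {s : StepKind} {v : V}
    (hv : v ∉ B) : intOK G B s .fwd v := ⟨fun hc => absurd hc (coll_fwd_right s), fun _ => hv⟩

def actF (G : MixedGraph V) (B : Set V) : StepKind → V → List (StepKind × V) → Prop
  | _, _, [] => True
  | s, v, (t, w) :: rest => G.stepOK v w t ∧ intOK G B s t v ∧ actF G B t w rest

@[simp] lemma actF_nil {G : MixedGraph V} {B : Set V} {s v} : actF G B s v [] := trivial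

lemma actF_cons {G : MixedGraph V} {B : Set V} {s v t w rest} :
    actF G B s v ((t, w) :: rest) ↔
      G.stepOK v w t ∧ intOK G B s t v ∧ actF G B t w rest := Iff.rfl

def lastV (v : V) (L : List (StepKind × V)) : V := (L.map Prod.snd).getLastD v
def lastK (s : StepKind) (L : List (StepKind × V)) : StepKind := (L.map Prod.fst).getLastD s

lemma getLastD_append' {α : Type*} (l m : List α) (d : α) :
    (l ++ m).getLastD d = m.getLastD (l.getLastD d) := by
  induction l generalizing d with
  | nil => rfl
  | cons a l ih => rw [List.cons_append, List.getLastD_cons, ih, List.getLastD_cons]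

@[simp] lemma lastV_nil (v : V) : lastV v ([] : List (StepKind × V)) = v := rfl
@[simp] lemma lastK_nil (s : StepKind) : lastK s ([] : List (StepKind × V)) = s := rfl
lemma lastV_cons (v : V) (t : StepKind) (w : V) (L : List (StepKind × V)) :
    lastV v ((t, w) :: L) = lastV w L := by
  unfold lastV; rw [List.map_cons, List.getLastD_cons]
lemma lastK_cons (s : StepKind) (t : StepKind) (w : V) (L : List (StepKind × V)) :
    lastK s ((t, w) :: L) = lastK t L := by
  unfold lastK; rw [List.map_cons, List.getLastD_cons]
lemma lastV_append (v : V) (L M : List (StepKind × V)) :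
    lastV v (L ++ M) = lastV (lastV v L) M := by
  unfold lastV; rw [List.map_append, getLastD_append']
lemma lastK_append (s : StepKind) (L M : List (StepKind × V)) :
    lastK s (L ++ M) = lastK (lastK s L) M := by
  unfold lastK; rw [List.map_append, getLastD_append']
@[simp] lemma lastV_concat (v : V) (L : List (StepKind × V)) (t : StepKind) (w : V) :
    lastV v (L ++ [(t, w)]) = w := by
  unfold lastV; rw [List.map_append]; exact List.getLastD_concat ..
@[simp] lemma lastK_concat (s : StepKind) (L : List (StepKind × V)) (t : StepKind) (w : V) :
    lastK s (L ++ [(t, w)]) = t := by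
  unfold lastK; rw [List.map_append]; exact List.getLastD_concat ..

@[simp] lemma lastV_singleton (v : V) (t : StepKind) (w : V) :
    lastV v [(t, w)] = w := rfl
@[simp] lemma lastK_singleton (s : StepKind) (t : StepKind) (w : V) :
    lastK s [(t, w)] = t := rfl

lemma lastV_ne_nil {v x : V} {L : List (StepKind × V)} (h : L ≠ []) :
    lastV v L = lastV x L := by
  induction L generalizing v x with
  | nil => simp at h
  | cons p L ih =>
    obtain ⟨t, w⟩ := p
    rw [lastV_cons, lastV_cons]

lemma lastK_ne_nil {s x : StepKind} {L : List (StepKind × V)} (h : L ≠ []) :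
    lastK s L = lastK x L := by
  induction L generalizing s x with
  | nil => simp at h
  | cons p L ih =>
    obtain ⟨t, w⟩ := p
    rw [lastK_cons, lastK_cons]

lemma lastK_all {k : StepKind} {L : List (StepKind × V)} (h : ∀ p ∈ L, p.1 = k) :
    lastK k L = k := by
  induction L with
  | nil => rfl
  | cons p L ih =>
    obtain ⟨t, w⟩ := p
    rw [lastK_cons]
    have ht : t = k := h (t, w) (List.mem_cons_self)
    subst ht
    exact ih (fun p hp => h p (by simp [hp]))

lemma getLast?_eq_lastKV {L : List (StepKind × V)} {k : StepKind} {x : V}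
    (h : L.getLast? = some (k, x)) (s : StepKind) (v : V) :
    lastK s L = k ∧ lastV v L = x := by
  induction L generalizing s v with
  | nil => simp at h
  | cons p L ih =>
    obtain ⟨t, w⟩ := p
    rw [lastK_cons, lastV_cons]
    cases L with
    | nil =>
      simp only [List.getLast?_singleton, Option.some.injEq, Prod.mk.injEq] at h
      exact ⟨by simp [h.1], by simp [h.2]⟩
    | cons q M => exact ih (by rwa [List.getLast?_cons_cons] at h) t w

lemma actF_append {G : MixedGraph V} {B : Set V} {s : StepKind} {v : V}
    (P Q : List (StepKind × V)) :
    actF G B s v (P ++ Q) ↔ actF G B s v P ∧ actF G B (lastK s P) (lastV v P) Q := by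
  induction P generalizing s v with
  | nil => simp
  | cons p P ih =>
    obtain ⟨t, w⟩ := p
    simp only [List.cons_append, actF_cons, lastK_cons, lastV_cons, ih, and_assoc]

@[simp] lemma stepOK_fwd {G : MixedGraph V} {u v : V} : G.stepOK u v .fwd ↔ G.dir u v := Iff.rfl
@[simp] lemma stepOK_bwd {G : MixedGraph V} {u v : V} : G.stepOK u v .bwd ↔ G.dir v u := Iff.rfl
@[simp] lemma stepOK_bidir {G : MixedGraph V} {u v : V} : G.stepOK u v .bidir ↔ G.bi u v := Iff.rfl

/-- Active-walk connectivity: there is an active (unblocked) walk from `a` to `c`. -/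
def AConn (G : MixedGraph V) (B : Set V) (a c : V) : Prop :=
  ∃ L, L ≠ [] ∧ actF G B .bwd a L ∧ lastV a L = c

lemma actF_retarget {G : MixedGraph V} {B : Set V} {s : StepKind} {v : V}
    {L : List (StepKind × V)} (h : actF G B s v L) (hv : v ∉ B) : actF G B .bwd v L := by
  cases L with
  | nil => trivial
  | cons p rest =>
    obtain ⟨t, w⟩ := p
    exact ⟨h.1, intOK_of_notmem hv, h.2.2⟩

lemma actF_start_notin {G : MixedGraph V} {B : Set V} {v : V}
    {L : List (StepKind × V)} (h : actF G B .bwd v L) (hne : L ≠ []) : v ∉ B := by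
  cases L with
  | nil => exact absurd rfl hne
  | cons p rest =>
    obtain ⟨t, w⟩ := p
    exact h.2.1.2 (coll_bwd_left t)

/-- If an active walk starts with an arrowhead into `x` and eventually takes a
non-forward step, then `x` has a descendant in `B`. -/
lemma descend_of_turn {G : MixedGraph V} {B : Set V} :
    ∀ (P : List (StepKind × V)) (x : V) (s : StepKind), s.headRight →
      actF G B s x P → (∃ p ∈ P, p.1 ≠ .fwd) → ∃ b ∈ B, G.descends x b := by
  intro P
  induction P with
  | nil => rintro x s _ _ ⟨p, hp, _⟩; simp at hp
  | cons q P ih =>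
    rintro x s hs hact ⟨p, hp, hpf⟩
    obtain ⟨k, w⟩ := q
    obtain ⟨hstep, hint, hrest⟩ := hact
    by_cases hk : k = .fwd
    · subst hk
      have hp' : p ∈ P := by
        rcases List.mem_cons.1 hp with h | h
        · exact absurd (by rw [h]) hpf
        · exact h
      obtain ⟨b, hb, hdesc⟩ := ih w .fwd trivial hrest ⟨p, hp', hpf⟩
      exact ⟨b, hb, Relation.ReflTransGen.head hstep hdesc⟩
    · exact hint.1 ⟨hs, headLeft_of_ne_fwd hk⟩

lemma exists_split_of_mem {a : V} {L : List (StepKind × V)} (h : a ∈ L.map Prod.snd) :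
    ∃ L1 t L2, L = L1 ++ (t, a) :: L2 := by
  obtain ⟨p, hp, hpa⟩ := List.mem_map.1 h
  obtain ⟨k, y⟩ := p
  cases hpa
  obtain ⟨s, t, rfl⟩ := List.append_of_mem hp
  exact ⟨s, k, t, rfl⟩

lemma exists_dup_split {L : List (StepKind × V)} (h : ¬ (L.map Prod.snd).Nodup) :
    ∃ L1 s v L2 t L3, L = L1 ++ (s, v) :: (L2 ++ (t, v) :: L3) := by
  induction L with
  | nil => simp at h
  | cons p L ih =>
    obtain ⟨k, y⟩ := p
    rw [List.map_cons, List.nodup_cons] at h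
    by_cases hy : y ∈ L.map Prod.snd
    · obtain ⟨L1, t, L2, rfl⟩ := exists_split_of_mem hy
      exact ⟨[], k, y, L1, t, L2, by simp⟩
    · have hnd : ¬ (L.map Prod.snd).Nodup := fun hn => h ⟨hy, hn⟩
      obtain ⟨L1, s, v, L2, t, L3, rfl⟩ := ih hnd
      exact ⟨(k, y) :: L1, s, v, L2, t, L3, by simp⟩

lemma actF_getElem_stepOK {G : MixedGraph V} {B : Set V} :
    ∀ (L : List (StepKind × V)) (v : V) (s : StepKind), actF G B s v L →
      ∀ i (h : i < L.length),
        G.stepOK ((v :: L.map Prod.snd)[i]'(by simp; omega)) (L[i]'h).2 (L[i]'h).1 := by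
  intro L
  induction L with
  | nil => intro v s _ i h; simp at h
  | cons q rest ih =>
    intro v s hact i h
    obtain ⟨t, w⟩ := q
    obtain ⟨h1, h2, h3⟩ := hact
    match i with
    | 0 => simpa using h1
    | (k + 1) =>
      have := ih w t h3 k (by simpa using h)
      simpa using this

lemma actF_getElem_intOK {G : MixedGraph V} {B : Set V} :
    ∀ (L : List (StepKind × V)) (v : V) (s : StepKind), actF G B s v L →
      ∀ i (h : i + 1 < L.length),
        intOK G B (L[i]'(by omega)).1 (L[i+1]'h).1 (L[i]'(by omega)).2 := by
  intro L
  induction L with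
  | nil => intro v s _ i h; simp at h
  | cons q rest ih =>
    intro v s hact i h
    obtain ⟨t, w⟩ := q
    obtain ⟨h1, h2, h3⟩ := hact
    match i with
    | 0 =>
      match rest, h3 with
      | (u, x) :: rest', h3 => simpa using h3.2.1
    | (k + 1) =>
      have := ih w t h3 k (by simpa using h)
      simpa using this

lemma actF_of_getElem {G : MixedGraph V} {B : Set V} :
    ∀ (L : List (StepKind × V)) (v : V) (s : StepKind),
      (∀ i (h : i < L.length),
        G.stepOK ((v :: L.map Prod.snd)[i]'(by simp; omega)) (L[i]'h).2 (L[i]'h).1) →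
      (∀ i (h : i + 1 < L.length),
        intOK G B (L[i]'(by omega)).1 (L[i+1]'h).1 (L[i]'(by omega)).2) →
      (∀ t w rest, L = (t, w) :: rest → intOK G B s t v) →
      actF G B s v L := by
  intro L
  induction L with
  | nil => intro v s _ _ _; trivial
  | cons q rest ih =>
    intro v s hstep hint hstart
    obtain ⟨t, w⟩ := q
    refine ⟨hstep 0 (by simp), hstart t w rest rfl, ?_⟩
    refine ih w t (fun i h => hstep (i+1) (by simpa using h))
      (fun i h => hint (i+1) (by simpa using h)) ?_
    rintro u x rest' rfl
    simpa using hint 0 (by simp)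

lemma vertexList_last (L : List (StepKind × V)) (v : V) :
    (v :: L.map Prod.snd)[L.length]'(by simp) = lastV v L := by
  induction L generalizing v with
  | nil => rfl
  | cons q rest ih =>
    obtain ⟨t, w⟩ := q
    rw [lastV_cons]
    simpa using ih w

lemma path_of_nodup {G : MixedGraph V} {B : Set V} {a c : V} {L : List (StepKind × V)}
    (hact : actF G B .bwd a L) (hlast : lastV a L = c)
    (hnd : (a :: L.map Prod.snd).Nodup) :
    ∃ p : Path G, p.verts 0 = a ∧ p.verts (Fin.last p.n) = c ∧ ¬ G.Blocked p B := by
  let pverts : Fin (L.length + 1) → V :=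
    fun i => (a :: L.map Prod.snd)[i.val]'(by have := i.isLt; simp; omega)
  let psteps : Fin L.length → StepKind := fun i => (L[i.val]'(i.isLt)).1
  have hinj : Function.Injective pverts :=
    fun i j hij => Fin.ext ((List.Nodup.getElem_inj_iff hnd).mp hij)
  have hok : ∀ i : Fin L.length, G.stepOK (pverts i.castSucc) (pverts i.succ) (psteps i) := by
    intro i
    have h := actF_getElem_stepOK L a .bwd hact i.val i.isLt
    have hv : pverts i.succ = (L[i.val]'(i.isLt)).2 := by
      show (a :: L.map Prod.snd)[i.val + 1]'_ = _
      rw [List.getElem_cons_succ]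
      exact List.getElem_map _
    rw [hv]
    exact h
  refine ⟨⟨L.length, pverts, psteps, hinj, hok⟩, ?_, ?_, ?_⟩
  · show pverts 0 = a
    simp [pverts]
  · show pverts (Fin.last L.length) = c
    have : pverts (Fin.last L.length) = (a :: L.map Prod.snd)[L.length]'(by simp) := rfl
    rw [this, vertexList_last L a]
    exact hlast
  · rintro ⟨j, hj, hcase⟩
    have hjn : j.val < L.length := j.isLt
    have hj1 : 1 ≤ j.val := hj
    have harith : j.val - 1 + 1 = j.val := by omega
    have hio := actF_getElem_intOK L a .bwd hact (j.val - 1) (by omega)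
    have hidx : (L[j.val - 1 + 1]'(by omega)) = L[j.val]'hjn := by congr 1
    rw [hidx] at hio
    have hvert : pverts j.castSucc = (L[j.val - 1]'(by omega)).2 := by
      show (a :: L.map Prod.snd)[j.val]'(by simp) = _
      set m := j.val - 1 with hm
      have hj' : j.val = m + 1 := by omega
      simp only [hj', List.getElem_cons_succ]
      exact List.getElem_map _
    have hcoll : G.IsCollider ⟨L.length, pverts, psteps, hinj, hok⟩ j hj ↔
        coll (L[j.val - 1]'(by omega)).1 (L[j.val]'hjn).1 := Iff.rfl
    rcases hcase with ⟨hnc, hmem⟩ | ⟨hc, hnod⟩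
    · have hmem' : (L[j.val - 1]'(by omega)).2 ∈ B := by rw [← hvert]; exact hmem
      exact hio.2 (fun hcl => hnc (hcoll.2 hcl)) hmem'
    · obtain ⟨b, hb, hdesc⟩ := hio.1 (hcoll.1 hc)
      apply hnod b hb
      show G.descends (pverts j.castSucc) b
      rw [hvert]
      exact hdesc

lemma shrink {G : MixedGraph V} {B : Set V} {a c : V} (hac : a ≠ c) :
    ∀ n (L : List (StepKind × V)), L.length ≤ n → L ≠ [] → actF G B .bwd a L →
      lastV a L = c →
      ∃ p : Path G, p.verts 0 = a ∧ p.verts (Fin.last p.n) = c ∧ ¬ G.Blocked p B := by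
  intro n
  induction n with
  | zero =>
    intro L h hne
    cases L with
    | nil => exact absurd rfl hne
    | cons q L' => simp at h
  | succ n ih =>
    intro L hlen hne hact hlast
    by_cases hnd : (a :: L.map Prod.snd).Nodup
    · exact path_of_nodup hact hlast hnd
    · rw [List.nodup_cons] at hnd
      by_cases ha : a ∈ L.map Prod.snd
      · -- the start vertex repeats: drop the initial loop
        obtain ⟨L1, t, L2, rfl⟩ := exists_split_of_mem ha
        have hanotB : a ∉ B := actF_start_notin hact (by simp)
        cases L2 with
        | nil =>
          exfalso
          rw [lastV_append] at hlast
          simp only [lastV_cons, lastV_nil] at hlast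
          exact hac hlast
        | cons q L2' =>
          have hdec := (actF_append L1 ((t, a) :: q :: L2')).1 hact
          have h3 : actF G B t a (q :: L2') := hdec.2.2.2
          have h4 : actF G B .bwd a (q :: L2') := actF_retarget h3 hanotB
          apply ih (q :: L2') (by simp at hlen ⊢; omega) (by simp) h4
          rw [lastV_append, lastV_cons] at hlast
          exact hlast
      · -- an interior vertex repeats
        have hnd' : ¬ (L.map Prod.snd).Nodup := fun hn => hnd ⟨ha, hn⟩
        obtain ⟨L1, s, v, L2, t, L3, rfl⟩ := exists_dup_split hnd'
        have hre : L1 ++ (s, v) :: (L2 ++ (t, v) :: L3) =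
            (L1 ++ [(s, v)]) ++ ((L2 ++ [(t, v)]) ++ L3) := by simp
        rw [hre] at hact hlast hlen
        have h1 := (actF_append _ _).1 hact
        have hP1 := h1.1
        have hQ := h1.2
        rw [lastK_concat, lastV_concat] at hQ
        have h2 := (actF_append _ _).1 hQ
        have hP2 : actF G B s v (L2 ++ [(t, v)]) := h2.1
        have hQ3 := h2.2
        rw [lastK_concat, lastV_concat] at hQ3
        cases L3 with
        | nil =>
          have hc : v = c := by
            rw [lastV_append, lastV_append] at hlast
            simpa using hlast
          apply ih (L1 ++ [(s, v)]) (by simp at hlen ⊢; omega) (by simp) hP1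
          simp [hc]
        | cons q L3' =>
          obtain ⟨u, z⟩ := q
          obtain ⟨hzstep, hintv, hrest3⟩ := hQ3
          have hhead : ∃ t₂ y₂ R₂, L2 ++ [(t, v)] = (t₂, y₂) :: R₂ := by
            cases L2 with
            | nil => exact ⟨t, v, [], rfl⟩
            | cons r R => exact ⟨r.1, r.2, R ++ [(t, v)], by simp⟩
          obtain ⟨t₂, y₂, R₂, heq⟩ := hhead
          have i2 : intOK G B s t₂ v := by rw [heq] at hP2; exact hP2.2.1
          have hJ : intOK G B s u v := by
            constructor
            · intro hcu
              by_cases hvB : v ∈ B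
              · exact ⟨v, hvB, Relation.ReflTransGen.refl⟩
              · by_cases hct2 : coll s t₂
                · exact i2.1 hct2
                · by_cases hctu : coll t u
                  · exact hintv.1 hctu
                  · have ht : t ≠ .fwd := by
                      intro hf
                      subst hf
                      exact hctu ⟨trivial, hcu.2⟩
                    exact descend_of_turn (L2 ++ [(t, v)]) v s hcu.1 hP2
                      ⟨(t, v), by simp, ht⟩
            · intro hnc hvB
              apply hnc
              constructor
              · by_contra hsr
                exact i2.2 (fun hc' => hsr hc'.1) hvB
              · by_contra hul
                exact hintv.2 (fun hc' => hul hc'.2) hvB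
          apply ih ((L1 ++ [(s, v)]) ++ (u, z) :: L3') (by simp at hlen ⊢; omega)
            (by simp) ?_ ?_
          · refine (actF_append _ _).2 ⟨hP1, ?_⟩
            rw [lastK_concat, lastV_concat]
            exact ⟨hzstep, hJ, hrest3⟩
          · rw [lastV_append, lastV_cons]
            rw [lastV_append, lastV_append, lastV_cons] at hlast
            exact hlast

lemma walk_to_path {G : MixedGraph V} {B : Set V} {a c : V} (hac : a ≠ c)
    (h : AConn G B a c) :
    ∃ p : Path G, p.verts 0 = a ∧ p.verts (Fin.last p.n) = c ∧ ¬ G.Blocked p B := by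
  obtain ⟨L, hne, hact, hlast⟩ := h
  exact shrink hac L.length L le_rfl hne hact hlast

lemma walk_of_path {G : MixedGraph V} {B : Set V} (p : Path G) (hn : 0 < p.n)
    (ha : p.verts 0 ∉ B) (hnb : ¬ G.Blocked p B) :
    AConn G B (p.verts 0) (p.verts (Fin.last p.n)) := by
  set L := List.ofFn (fun i : Fin p.n => (p.steps i, p.verts i.succ)) with hL
  have hlen : L.length = p.n := by simp [hL]
  have hget : ∀ i (h : i < L.length),
      L[i]'h = (p.steps ⟨i, by omega⟩, p.verts (Fin.succ ⟨i, by omega⟩)) := by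
    intro i h
    simp [hL, List.getElem_ofFn]
  have hvert : ∀ i (h : i < L.length + 1),
      (p.verts 0 :: L.map Prod.snd)[i]'(by simp; omega) = p.verts ⟨i, by omega⟩ := by
    intro i h
    match i with
    | 0 => simp
    | (k + 1) =>
      rw [List.getElem_cons_succ, List.getElem_map, hget k (by omega)]
      rfl
  have hnbl : ∀ (j : Fin p.n) (hj : 0 < j.val),
      (¬ G.IsCollider p j hj → p.verts j.castSucc ∉ B) ∧
        (G.IsCollider p j hj → ∃ w ∈ B, G.descends (p.verts j.castSucc) w) := by
    intro j hj
    constructor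
    · intro hnc hmem
      exact hnb ⟨j, hj, Or.inl ⟨hnc, hmem⟩⟩
    · intro hc
      by_contra hno
      push_neg at hno
      exact hnb ⟨j, hj, Or.inr ⟨hc, hno⟩⟩
  refine ⟨L, by rw [← List.length_pos_iff_ne_nil]; omega, ?_, ?_⟩
  · apply actF_of_getElem L (p.verts 0) .bwd
    · intro i h
      rw [hvert i (by omega), hget i h]
      have := p.ok ⟨i, by omega⟩
      convert this using 2 <;> rfl
    · intro i h
      set j : Fin p.n := ⟨i + 1, by omega⟩ with hj
      have hj0 : 0 < j.val := Nat.succ_pos i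
      have hstep1 : (L[i]'(by omega)).1 = p.steps ⟨i, by omega⟩ := by
        rw [hget i (by omega)]
      have hstep2 : (L[i+1]'h).1 = p.steps j := by rw [hget (i+1) h]
      have hv : (L[i]'(by omega)).2 = p.verts j.castSucc := by
        rw [hget i (by omega)]
        rfl
      have hcoll : coll (L[i]'(by omega)).1 (L[i+1]'h).1 ↔ G.IsCollider p j hj0 := by
        unfold MixedGraph.IsCollider coll
        rw [hstep1, hstep2]
        have : (⟨j.val - 1, lt_of_le_of_lt (Nat.sub_le _ _) j.isLt⟩ : Fin p.n) =
            ⟨i, by omega⟩ := by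
          apply Fin.ext
          simp [hj]
        rw [this]
      constructor
      · intro hcl
        obtain ⟨w, hw, hd⟩ := (hnbl j hj0).2 (hcoll.1 hcl)
        exact ⟨w, hw, by rw [hv]; exact hd⟩
      · intro hncl
        rw [hv]
        exact (hnbl j hj0).1 (fun hc => hncl (hcoll.2 hc))
    · intro t w rest heq
      exact intOK_of_notmem ha
  · have : lastV (p.verts 0) L = (p.verts 0 :: L.map Prod.snd)[L.length]'(by simp) :=
      (vertexList_last L _).symm
    rw [this, hvert L.length (by omega)]
    congr 1
    apply Fin.ext
    simp [Fin.last, hlen]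

lemma msep_iff_no_aconn {G : MixedGraph V} {A C B : Set V}
    (hAB : Disjoint A B) (hAC : Disjoint A C) :
    G.MSep A C B ↔ ∀ a ∈ A, ∀ c ∈ C, ¬ AConn G B a c := by
  constructor
  · intro hms a ha c hc hconn
    have hac : a ≠ c := by
      intro h
      exact Set.disjoint_left.1 hAC ha (h ▸ hc)
    obtain ⟨p, h0, hl, hnb⟩ := walk_to_path hac hconn
    exact hnb (hms p (h0 ▸ ha) (hl ▸ hc))
  · intro h p h0 hl
    by_contra hnb
    have hn : 0 < p.n := by
      rcases Nat.eq_zero_or_pos p.n with h0' | h' 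
      · exfalso
        have : p.verts (Fin.last p.n) = p.verts 0 := by
          congr 1
          apply Fin.ext
          simp [Fin.last, h0']
        rw [this] at hl
        exact Set.disjoint_left.1 hAC h0 hl
      · exact h'
    have haB : p.verts 0 ∉ B := Set.disjoint_left.1 hAB h0
    exact h _ h0 _ hl (walk_of_path p hn haB hnb)

def okW (G : MixedGraph V) : V → List (StepKind × V) → Prop
  | _, [] => True
  | x, (t, y) :: rest => G.stepOK x y t ∧ okW G y rest

@[simp] lemma okW_nil {G : MixedGraph V} {x : V} : okW G x [] := trivial

lemma actF_okW {G : MixedGraph V} {B : Set V} :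
    ∀ {L : List (StepKind × V)} {s : StepKind} {x : V}, actF G B s x L → okW G x L := by
  intro L
  induction L with
  | nil => intro s x _; trivial
  | cons q rest ih =>
    intro s x h
    obtain ⟨t, y⟩ := q
    exact ⟨h.1, ih h.2.2⟩

lemma okW_append {G : MixedGraph V} :
    ∀ (P Q : List (StepKind × V)) (x : V),
      okW G x (P ++ Q) ↔ okW G x P ∧ okW G (lastV x P) Q := by
  intro P
  induction P with
  | nil => intro Q x; simp
  | cons q P ih =>
    intro Q x
    obtain ⟨t, y⟩ := q
    simp only [List.cons_append, okW, lastV_cons]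
    rw [ih, and_assoc]

lemma actF_no_bidir {G : MixedGraph V} {B : Set V} (hbi : ∀ u v, ¬ G.bi u v) :
    ∀ {L : List (StepKind × V)} {s : StepKind} {x : V}, actF G B s x L →
      ∀ p ∈ L, p.1 ≠ .bidir := by
  intro L
  induction L with
  | nil => intro s x _ p hp; simp at hp
  | cons q rest ih =>
    intro s x h p hp
    obtain ⟨t, y⟩ := q
    rcases List.mem_cons.1 hp with rfl | hp'
    · intro hb
      subst hb
      exact hbi _ _ h.1
    · exact ih h.2.2 p hp'

section Projection

variable {O H : Type*}

lemma notinlB {B : Set O} (l : H) : (Sum.inr l : O ⊕ H) ∉ Sum.inl '' B := by simp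

lemma inl_notin {B : Set O} {v : O} (h : v ∉ B) : (Sum.inl v : O ⊕ H) ∉ Sum.inl '' B := by
  simp [h]

lemma thruL_toRTG {G : MixedGraph (O ⊕ H)} {a b : H} (h : thruL G a b) :
    Relation.ReflTransGen G.dir (Sum.inr a) (Sum.inr b) :=
  Relation.ReflTransGen.lift Sum.inr (fun _ _ hd => hd) _ _ h

lemma desc_lift {G : MixedGraph (O ⊕ H)} {v w : O}
    (h : (latentProj G).descends v w) :
    G.descends (Sum.inl v) (Sum.inl w) := by
  induction h with
  | refl => exact Relation.ReflTransGen.refl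
  | tail hstep hl ih =>
    rcases hl with hd | ⟨la, lb, h1, h2, h3⟩
    · exact ih.tail hd
    · exact (ih.trans (Relation.ReflTransGen.head h1 (thruL_toRTG h2))).tail h3

lemma fchain {G : MixedGraph (O ⊕ H)} {B : Set O} {a b : H} (h : thruL G a b) :
    ∃ P : List (StepKind × (O ⊕ H)),
      (∀ s, actF G (Sum.inl '' B) s (Sum.inr a) P) ∧
      lastV (Sum.inr a : O ⊕ H) P = Sum.inr b ∧ ∀ p ∈ P, p.1 = .fwd := by
  induction h using Relation.ReflTransGen.head_induction_on with
  | refl => exact ⟨[], fun _ => actF_nil, rfl, by simp⟩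
  | @head a' c hed _ ih =>
    obtain ⟨P, hP, hlast, hall⟩ := ih
    refine ⟨(.fwd, Sum.inr c) :: P, ?_, ?_, ?_⟩
    · intro s
      exact ⟨hed, intOK_fwd_of_notmem (notinlB _), hP .fwd⟩
    · rw [lastV_cons]; exact hlast
    · intro p hp
      rcases List.mem_cons.1 hp with rfl | hp'
      · rfl
      · exact hall p hp'

lemma bchain {G : MixedGraph (O ⊕ H)} {B : Set O} {a b : H} (h : thruL G a b) :
    ∃ P : List (StepKind × (O ⊕ H)),
      (∀ s, ¬ s.headRight → actF G (Sum.inl '' B) s (Sum.inr b) P) ∧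
      lastV (Sum.inr b : O ⊕ H) P = Sum.inr a ∧ ∀ p ∈ P, p.1 = .bwd := by
  induction h with
  | refl => exact ⟨[], fun _ _ => actF_nil, rfl, by simp⟩
  | @tail c b' _ hstep ih =>
    obtain ⟨P, hP, hlast, hall⟩ := ih
    refine ⟨(.bwd, Sum.inr c) :: P, ?_, ?_, ?_⟩
    · intro s hs
      exact ⟨hstep, ⟨fun hc => absurd hc.1 hs, fun _ => notinlB _⟩,
        hP .bwd (by simp)⟩
    · rw [lastV_cons]; exact hlast
    · intro p hp
      rcases List.mem_cons.1 hp with rfl | hp'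
      · rfl
      · exact hall p hp'

lemma coll_bwd_iff_bidir (s : StepKind) : coll s .bwd ↔ coll s .bidir := by simp [coll]

lemma seg {G : MixedGraph (O ⊕ H)} {B : Set O} {v w : O} {t : StepKind}
    (hstep : (latentProj G).stepOK v w t) (s : StepKind)
    (hint : intOK G (Sum.inl '' B) s t (Sum.inl v)) :
    ∃ P : List (StepKind × (O ⊕ H)), P ≠ [] ∧
      actF G (Sum.inl '' B) s (Sum.inl v) P ∧
      lastV (Sum.inl v : O ⊕ H) P = Sum.inl w ∧
      ((lastK s P).headRight ↔ t.headRight) := by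
  cases t with
  | fwd =>
    rcases hstep with hd | ⟨la, lb, h1, h2, h3⟩
    · exact ⟨[(.fwd, Sum.inl w)], by simp, ⟨hd, hint, actF_nil⟩, by simp, by simp⟩
    · obtain ⟨P, hP, hlast, hall⟩ := fchain (B := B) h2
      refine ⟨(.fwd, Sum.inr la) :: (P ++ [(.fwd, Sum.inl w)]), by simp, ?_, ?_, ?_⟩
      · refine ⟨h1, hint, ?_⟩
        refine (actF_append _ _).2 ⟨hP .fwd, ?_⟩
        rw [hlast]
        exact ⟨h3, intOK_fwd_of_notmem (notinlB _), actF_nil⟩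
      · rw [lastV_cons, lastV_append]; simp
      · rw [lastK_cons, lastK_append]; simp
  | bwd =>
    rcases hstep with hd | ⟨la, lb, h1, h2, h3⟩
    · exact ⟨[(.bwd, Sum.inl w)], by simp, ⟨hd, hint, actF_nil⟩, by simp, by simp⟩
    · obtain ⟨P, hP, hlast, hall⟩ := bchain (B := B) h2
      refine ⟨(.bwd, Sum.inr lb) :: (P ++ [(.bwd, Sum.inl w)]), by simp, ?_, ?_, ?_⟩
      · refine ⟨h3, hint, ?_⟩
        refine (actF_append _ _).2 ⟨hP .bwd (fun hh => hh), ?_⟩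
        rw [hlast, lastK_all (k := .bwd) hall]
        exact ⟨h1, intOK_of_notmem (notinlB _), actF_nil⟩
      · rw [lastV_cons, lastV_append]; simp
      · rw [lastK_cons, lastK_append]; simp
  | bidir =>
    obtain ⟨u, la, lb, hua, h1, hub, h2⟩ := hstep
    obtain ⟨Pr, hPr, hPrlast, hPrall⟩ := bchain (B := B) hua
    obtain ⟨Pf, hPf, hPflast, hPfall⟩ := fchain (B := B) hub
    refine ⟨(.bwd, Sum.inr la) :: (Pr ++ (Pf ++ [(.fwd, Sum.inl w)])), by simp, ?_, ?_, ?_⟩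
    · refine ⟨h1, intOK_congr (coll_bwd_iff_bidir s) hint, ?_⟩
      refine (actF_append _ _).2 ⟨hPr .bwd (fun hh => hh), ?_⟩
      rw [hPrlast, lastK_all (k := .bwd) hPrall]
      refine (actF_append _ _).2 ⟨hPf .bwd, ?_⟩
      rw [hPflast]
      exact ⟨h2, intOK_fwd_of_notmem (notinlB _), actF_nil⟩
    · rw [lastV_cons, lastV_append, lastV_append]; simp
    · rw [lastK_cons, lastK_append, lastK_append]; simp

lemma lift_walk {G : MixedGraph (O ⊕ H)} {B : Set O} :
    ∀ (Lp : List (StepKind × O)) (v : O) (s sG : StepKind),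
      (sG.headRight ↔ s.headRight) →
      actF (latentProj G) B s v Lp →
      ∃ M, actF G (Sum.inl '' B) sG (Sum.inl v) M ∧
        lastV (Sum.inl v : O ⊕ H) M = Sum.inl (lastV v Lp) ∧
        (M = [] ↔ Lp = []) ∧
        ((lastK sG M).headRight ↔ (lastK s Lp).headRight) := by
  intro Lp
  induction Lp with
  | nil =>
    intro v s sG hR _
    exact ⟨[], actF_nil, rfl, by simp, by simpa⟩
  | cons q rest ih =>
    intro v s sG hR hact
    obtain ⟨t, w⟩ := q
    obtain ⟨hstep, hint, hrest⟩ := hact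
    have hintG : intOK G (Sum.inl '' B) sG t (Sum.inl v) := by
      constructor
      · intro hc
        obtain ⟨b, hb, hd⟩ := hint.1 ⟨hR.1 hc.1, hc.2⟩
        exact ⟨Sum.inl b, ⟨b, hb, rfl⟩, desc_lift hd⟩
      · intro hnc
        exact inl_notin (hint.2 (fun hc => hnc ⟨hR.2 hc.1, hc.2⟩))
    obtain ⟨P, hPne, hPact, hPlast, hPlk⟩ := seg hstep sG hintG
    obtain ⟨M, hMact, hMlast, hMnil, hMlk⟩ := ih w t (lastK sG P) hPlk hrest
    refine ⟨P ++ M, ?_, ?_, ?_, ?_⟩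
    · exact (actF_append _ _).2 ⟨hPact, by rw [hPlast]; exact hMact⟩
    · rw [lastV_append, hPlast, hMlast, lastV_cons]
    · simp [hPne]
    · rw [lastK_append, lastK_cons]
      exact hMlk

lemma aconn_lift {G : MixedGraph (O ⊕ H)} {B : Set O} {a c : O}
    (h : AConn (latentProj G) B a c) :
    AConn G (Sum.inl '' B) (Sum.inl a) (Sum.inl c) := by
  obtain ⟨Lp, hne, hact, hlast⟩ := h
  obtain ⟨M, hMact, hMlast, hMnil, _⟩ := lift_walk Lp a .bwd .bwd Iff.rfl hact
  exact ⟨M, fun hM => hne (hMnil.1 hM), hMact, by rw [hMlast, hlast]⟩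

/-- A pair of consecutive steps is fine if the shared (left) vertex, when latent,
is not a collider. -/
def NLCrel : (StepKind × (O ⊕ H)) → (StepKind × (O ⊕ H)) → Prop :=
  fun p q => (∃ l : H, p.2 = Sum.inr l) → ¬ coll p.1 q.1

lemma trunc {G : MixedGraph (O ⊕ H)} {B : Set O} {y b : O ⊕ H}
    (h : G.descends y b) (hb : b ∈ Sum.inl '' B) :
    ∃ b', b' ∈ Sum.inl '' B ∧
      Relation.ReflTransGen (fun p q => G.dir p q ∧ p ∉ Sum.inl '' B) y b' := by
  induction h using Relation.ReflTransGen.head_induction_on with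
  | refl => exact ⟨b, hb, .refl⟩
  | @head x z hxz _ ih =>
    by_cases hx : x ∈ Sum.inl '' B
    · exact ⟨x, hx, .refl⟩
    · obtain ⟨b', hb', hr⟩ := ih
      exact ⟨b', hb', .head ⟨hxz, hx⟩ hr⟩

lemma detourWalk {G : MixedGraph (O ⊕ H)} {B : Set O} {y b' : O ⊕ H}
    (h : Relation.ReflTransGen (fun p q => G.dir p q ∧ p ∉ Sum.inl '' B) y b')
    (hy : y ∉ Sum.inl '' B) (hb : b' ∈ Sum.inl '' B) :
    ∃ D : List (StepKind × (O ⊕ H)),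
      (∀ s, actF G (Sum.inl '' B) s y D) ∧
      D.getLast? = some (.bwd, y) ∧
      (∃ z₀, D.head? = some (.fwd, z₀)) ∧
      List.Chain' NLCrel D := by
  induction h using Relation.ReflTransGen.head_induction_on with
  | refl => exact absurd hb hy
  | @head x z hxz hzb ih =>
    clear hy
    have hx : x ∉ Sum.inl '' B := hxz.2
    by_cases hz : z ∈ Sum.inl '' B
    · refine ⟨[(.fwd, z), (.bwd, x)], ?_, by simp, ⟨z, rfl⟩, ?_⟩
      · intro s
        exact ⟨hxz.1, intOK_fwd_of_notmem hx,
          hxz.1, ⟨fun _ => ⟨z, hz, Relation.ReflTransGen.refl⟩,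
            fun hnc => absurd ⟨trivial, trivial⟩ hnc⟩, actF_nil⟩
      · refine List.isChain_cons.2 ⟨?_, by simp⟩
        rintro q hq ⟨l, hl⟩
        obtain ⟨b0, _, hb0⟩ := hz
        rw [← hb0] at hl
        simp at hl
    · obtain ⟨D, hDact, hDlast, hDhead, hDch⟩ := ih hz
      refine ⟨(.fwd, z) :: (D ++ [(.bwd, x)]), ?_, ?_, ⟨z, rfl⟩, ?_⟩
      · intro s
        refine ⟨hxz.1, intOK_fwd_of_notmem hx, ?_⟩
        refine (actF_append _ _).2 ⟨hDact .fwd, ?_⟩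
        have hk := getLast?_eq_lastKV hDlast .fwd z
        rw [hk.1, hk.2]
        exact ⟨hxz.1, intOK_of_notmem hz, actF_nil⟩
      · have hre : (StepKind.fwd, z) :: (D ++ [(StepKind.bwd, x)]) =
            ((StepKind.fwd, z) :: D) ++ [(StepKind.bwd, x)] := by simp
        rw [hre, List.getLast?_concat]
      · obtain ⟨z₀, hz₀⟩ := hDhead
        have hDne : D ≠ [] := by rintro rfl; simp at hz₀
        refine List.isChain_cons.2 ⟨?_, ?_⟩
        · intro q hq
          rw [Option.mem_def, List.head?_append_of_ne_nil _ hDne, hz₀] at hq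
          cases hq
          intro _
          exact coll_fwd_right _
        · refine List.isChain_append.2 ⟨hDch, by simp, ?_⟩
          intro p hp q hq
          rw [Option.mem_def, hDlast] at hp
          cases hp
          intro _
          exact coll_bwd_left _

lemma phase1 {G : MixedGraph (O ⊕ H)} {B : Set O} :
    ∀ (Lw : List (StepKind × (O ⊕ H))) (s : StepKind) (x : O ⊕ H),
      actF G (Sum.inl '' B) s x Lw →
      ∃ L', actF G (Sum.inl '' B) s x L' ∧ lastV x L' = lastV x Lw ∧
        List.Chain' NLCrel L' ∧
        L'.head?.map Prod.fst = Lw.head?.map Prod.fst ∧ (L' = [] ↔ Lw = []) := by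
  intro Lw
  induction Lw with
  | nil => exact fun s x _ => ⟨[], actF_nil, rfl, List.IsChain.nil, rfl, by simp⟩
  | cons q rest ih =>
    intro s x hact
    obtain ⟨t, y⟩ := q
    obtain ⟨hstep, hint, hrest⟩ := hact
    cases rest with
    | nil => exact ⟨[(t, y)], ⟨hstep, hint, actF_nil⟩, rfl, List.IsChain.singleton _, rfl, by simp⟩
    | cons r rest' =>
      obtain ⟨u, z⟩ := r
      by_cases hsplice : (∃ l : H, y = Sum.inr l) ∧ coll t u
      · obtain ⟨⟨l, rfl⟩, hcol⟩ := hsplice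
        obtain ⟨b, hb, hdes⟩ := hrest.2.1.1 hcol
        obtain ⟨b', hb', hr'⟩ := trunc hdes hb
        have hynot : (Sum.inr l : O ⊕ H) ∉ Sum.inl '' B := notinlB l
        obtain ⟨D, hDact, hDlast, hDhead, hDch⟩ := detourWalk hr' hynot hb'
        have hrest2 : actF G (Sum.inl '' B) .bwd (Sum.inr l) ((u, z) :: rest') :=
          actF_retarget hrest hynot
        obtain ⟨R, hRact, hRlast, hRch, hRhead, hRnil⟩ := ih .bwd (Sum.inr l) hrest2
        have hRne : R ≠ [] := fun h => by simp [h] at hRnil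
        have hk := getLast?_eq_lastKV hDlast t (Sum.inr l)
        refine ⟨(t, Sum.inr l) :: (D ++ R), ⟨hstep, hint, ?_⟩, ?_, ?_, by simp, by simp⟩
        · refine (actF_append _ _).2 ⟨hDact t, ?_⟩
          rw [hk.1, hk.2]
          exact hRact
        · conv_rhs => rw [lastV_cons]
          rw [lastV_cons, lastV_append, hk.2, hRlast]
        · obtain ⟨z₀, hz₀⟩ := hDhead
          have hDne : D ≠ [] := by rintro rfl; simp at hz₀
          refine List.isChain_cons.2 ⟨?_, ?_⟩
          · intro q hq
            rw [Option.mem_def, List.head?_append_of_ne_nil _ hDne, hz₀] at hq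
            cases hq
            intro _
            exact coll_fwd_right _
          · refine List.isChain_append.2 ⟨hDch, hRch, ?_⟩
            intro p hp q hq
            rw [Option.mem_def, hDlast] at hp
            cases hp
            intro _
            exact coll_bwd_left _
      · obtain ⟨R, hRact, hRlast, hRch, hRhead, hRnil⟩ := ih t y hrest
        have hRne : R ≠ [] := fun h => by simp [h] at hRnil
        refine ⟨(t, y) :: R, ⟨hstep, hint, hRact⟩, ?_, ?_, by simp, by simp⟩
        · rw [lastV_cons, lastV_cons, hRlast]
        · refine List.isChain_cons.2 ⟨?_, hRch⟩
          intro q hq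
          have hqu : q.1 = u := by
            rw [Option.mem_def] at hq
            rw [hq] at hRhead
            simpa using hRhead
          intro hlat hc
          exact hsplice ⟨hlat, hqu ▸ hc⟩

lemma chainFwd {G : MixedGraph (O ⊕ H)} :
    ∀ (P : List (StepKind × (O ⊕ H))) (x y : H),
      okW G (Sum.inr x) P → (∀ p ∈ P, p.1 = .fwd ∧ ∃ l : H, p.2 = Sum.inr l) →
      lastV (Sum.inr x : O ⊕ H) P = Sum.inr y → thruL G x y := by
  intro P
  induction P with
  | nil =>
    intro x y _ _ hl
    cases Sum.inr.inj hl
    exact Relation.ReflTransGen.refl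
  | cons q P ih =>
    intro x y hok hall hl
    obtain ⟨t, z⟩ := q
    obtain ⟨ht, l, rfl⟩ := hall (t, z) (List.mem_cons_self)
    subst ht
    refine Relation.ReflTransGen.head hok.1 (ih l y hok.2 ?_ ?_)
    · exact fun p hp => hall p (List.mem_cons_of_mem _ hp)
    · rw [lastV_cons] at hl; exact hl

lemma chainBwd {G : MixedGraph (O ⊕ H)} :
    ∀ (P : List (StepKind × (O ⊕ H))) (x y : H),
      okW G (Sum.inr x) P → (∀ p ∈ P, p.1 = .bwd ∧ ∃ l : H, p.2 = Sum.inr l) →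
      lastV (Sum.inr x : O ⊕ H) P = Sum.inr y → thruL G y x := by
  intro P
  induction P with
  | nil =>
    intro x y _ _ hl
    cases Sum.inr.inj hl
    exact Relation.ReflTransGen.refl
  | cons q P ih =>
    intro x y hok hall hl
    obtain ⟨t, z⟩ := q
    obtain ⟨ht, l, rfl⟩ := hall (t, z) (List.mem_cons_self)
    subst ht
    refine Relation.ReflTransGen.tail (ih l y hok.2 ?_ ?_) hok.1
    · exact fun p hp => hall p (List.mem_cons_of_mem _ hp)
    · rw [lastV_cons] at hl; exact hl

lemma lastV_latent {P : List (StepKind × (O ⊕ H))}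
    (hlat : ∀ p ∈ P, ∃ l : H, p.2 = Sum.inr l) (x : H) :
    ∃ b : H, lastV (Sum.inr x : O ⊕ H) P = Sum.inr b := by
  induction P generalizing x with
  | nil => exact ⟨x, rfl⟩
  | cons q P ih =>
    obtain ⟨t, z⟩ := q
    obtain ⟨l, rfl⟩ := hlat (t, z) (List.mem_cons_self)
    rw [lastV_cons]
    exact ih (fun p hp => hlat p (List.mem_cons_of_mem _ hp)) l

lemma firstObs {c : O} :
    ∀ (Lw : List (StepKind × (O ⊕ H))) (x : O ⊕ H), Lw ≠ [] →
      lastV x Lw = Sum.inl c →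
      ∃ R k w L2, Lw = R ++ (k, Sum.inl w) :: L2 ∧ ∀ p ∈ R, ∃ l : H, p.2 = Sum.inr l := by
  intro Lw
  induction Lw with
  | nil => intro x h; exact absurd rfl h
  | cons q rest ih =>
    intro x _ hlast
    obtain ⟨t, y⟩ := q
    cases y with
    | inl w => exact ⟨[], t, w, rest, rfl, by simp⟩
    | inr l =>
      rw [lastV_cons] at hlast
      cases rest with
      | nil => simp [lastV] at hlast
      | cons r rest' =>
        obtain ⟨R, k, w, L2, heq, hlat⟩ := ih (Sum.inr l) (by simp) hlast
        refine ⟨(t, Sum.inr l) :: R, k, w, L2, by rw [heq]; rfl, ?_⟩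
        intro p hp
        rcases List.mem_cons.1 hp with rfl | hp'
        · exact ⟨l, rfl⟩
        · exact hlat p hp'

lemma runSplit {w : O} :
    ∀ (R : List (StepKind × (O ⊕ H))) (k : StepKind),
      List.Chain' NLCrel (R ++ [(k, Sum.inl w)]) →
      (∀ p ∈ R, ∃ l : H, p.2 = Sum.inr l) →
      (∀ p ∈ R ++ [(k, Sum.inl w)], p.1 ≠ .bidir) →
      ∃ R1 R2, R = R1 ++ R2 ∧ (∀ p ∈ R1, p.1 = .bwd) ∧ (∀ p ∈ R2, p.1 = .fwd) ∧
        (R2 ≠ [] → k = .fwd) := by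
  intro R
  induction R with
  | nil =>
    intro k _ _ _
    exact ⟨[], [], rfl, by simp, by simp, fun h => absurd rfl h⟩
  | cons q R' ih =>
    intro k hch hlat hnb
    obtain ⟨t, y⟩ := q
    obtain ⟨hhead, hch'⟩ := List.isChain_cons.1 hch
    have hlat' : ∀ p ∈ R', ∃ l : H, p.2 = Sum.inr l :=
      fun p hp => hlat p (List.mem_cons_of_mem _ hp)
    have hnb' : ∀ p ∈ R' ++ [(k, Sum.inl w)], p.1 ≠ .bidir := by
      intro p hp
      rcases List.mem_append.1 hp with hp' | hp'
      · exact hnb p (by simp [hp'])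
      · exact hnb p (by simp at hp' ⊢; simp [hp'])
    have hylat : ∃ l : H, y = Sum.inr l := hlat (t, y) (List.mem_cons_self)
    obtain ⟨R1', R2', heq, hR1', hR2', hk'⟩ := ih k hch' hlat' hnb'
    cases t with
    | bidir => exact absurd rfl (hnb (.bidir, y) (by simp))
    | bwd =>
      refine ⟨(.bwd, y) :: R1', R2', by rw [heq]; rfl, ?_, hR2', hk'⟩
      intro p hp
      rcases List.mem_cons.1 hp with rfl | hp'
      · rfl
      · exact hR1' p hp'
    | fwd =>
      -- everything after a forward step stays forward
      have hnext : ∀ q' ∈ (R' ++ [(k, Sum.inl w)]).head?, q'.1 = .fwd := by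
        intro q' hq'
        have hnc : ¬ coll StepKind.fwd q'.1 := hhead q' hq' hylat
        have hq'nb : q'.1 ≠ .bidir := hnb' q' (List.mem_of_mem_head? hq')
        cases hq1 : q'.1 with
        | fwd => rfl
        | bwd => rw [hq1] at hnc; exact absurd ⟨trivial, trivial⟩ hnc
        | bidir => exact absurd hq1 hq'nb
      subst heq
      cases R1' with
      | nil =>
        refine ⟨[], (.fwd, y) :: R2', by simp, by simp, ?_, ?_⟩
        · intro p hp
          rcases List.mem_cons.1 hp with rfl | hp'
          · rfl
          · exact hR2' p hp'
        · intro _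
          cases hR2e : R2' with
          | nil =>
            subst hR2e
            exact hnext (k, Sum.inl w) (by simp)
          | cons a b => exact hk' (by simp [hR2e])
      | cons a R1'' =>
        exfalso
        have ha : a.1 = .bwd := hR1' a (by simp)
        have haf : a.1 = .fwd := hnext a (by simp)
        rw [ha] at haf
        exact StepKind.noConfusion haf

lemma runEdge {G : MixedGraph (O ⊕ H)} {v w : O} {k : StepKind}
    {R : List (StepKind × (O ⊕ H))}
    (hok : okW G (Sum.inl v : O ⊕ H) (R ++ [(k, Sum.inl w)]))
    (hlat : ∀ p ∈ R, ∃ l : H, p.2 = Sum.inr l)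
    (hch : List.Chain' NLCrel (R ++ [(k, Sum.inl w)]))
    (hnb : ∀ p ∈ R ++ [(k, Sum.inl w)], p.1 ≠ .bidir) :
    ∃ T, (latentProj G).stepOK v w T ∧
      (T.headLeft ↔ (match R with | [] => k | p :: _ => p.1).headLeft) ∧
      (T.headRight ↔ k.headRight) := by
  obtain ⟨R1, R2, rfl, hR1, hR2, hR2k⟩ := runSplit R k hch hlat hnb
  have hlat1 : ∀ p ∈ R1, ∃ l : H, p.2 = Sum.inr l :=
    fun p hp => hlat p (List.mem_append_left _ hp)
  have hlat2 : ∀ p ∈ R2, ∃ l : H, p.2 = Sum.inr l :=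
    fun p hp => hlat p (List.mem_append_right _ hp)
  cases k with
  | bidir => exact absurd rfl (hnb (.bidir, Sum.inl w) (by simp))
  | fwd =>
    cases R1 with
    | nil =>
      -- the whole run is forward
      refine ⟨.fwd, ?_, ?_, by simp⟩
      · cases R2 with
        | nil =>
          simp only [List.nil_append] at hok
          exact Or.inl hok.1
        | cons q R2' =>
          obtain ⟨t₂, y₂⟩ := q
          have ht₂ : t₂ = .fwd := hR2 (t₂, y₂) (by simp)
          obtain ⟨a, rfl⟩ := (hlat2 (t₂, y₂) (by simp)).imp (fun l hl => hl)
          subst ht₂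
          simp only [List.nil_append, List.cons_append] at hok
          obtain ⟨hva, hok'⟩ := hok
          rw [okW_append] at hok'
          obtain ⟨b, hb⟩ := lastV_latent
            (fun p hp => (hlat2 p (List.mem_cons_of_mem _ hp))) a
          have hthru : thruL G a b := chainFwd R2' a b hok'.1
            (fun p hp => ⟨hR2 p (List.mem_cons_of_mem _ hp),
              hlat2 p (List.mem_cons_of_mem _ hp)⟩) hb
          rw [hb] at hok'
          exact Or.inr ⟨a, b, hva, hthru, hok'.2.1⟩
      · cases R2 with
        | nil => simp
        | cons q R2' =>
          have : q.1 = .fwd := hR2 q (by simp)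
          simp [this]
    | cons q R1'' =>
      obtain ⟨t₁, y₁⟩ := q
      have ht₁ : t₁ = .bwd := hR1 (t₁, y₁) (by simp)
      obtain ⟨a, rfl⟩ := hlat1 (t₁, y₁) (by simp)
      subst ht₁
      refine ⟨.bidir, ?_, by simp, by simp⟩
      have hre : ((StepKind.bwd, Sum.inr a) :: R1'') ++ R2 ++ [(StepKind.fwd, Sum.inl w)] =
          (StepKind.bwd, Sum.inr a) :: (R1'' ++ (R2 ++ [(StepKind.fwd, Sum.inl w)])) := by
        simp
      rw [hre] at hok
      obtain ⟨hav, hok'⟩ := hok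
      rw [okW_append] at hok'
      obtain ⟨m, hm⟩ := lastV_latent
        (fun p hp => hlat1 p (List.mem_cons_of_mem _ hp)) a
      have hthru1 : thruL G m a := chainBwd R1'' a m hok'.1
        (fun p hp => ⟨hR1 p (List.mem_cons_of_mem _ hp),
          hlat1 p (List.mem_cons_of_mem _ hp)⟩) hm
      rw [hm] at hok'
      have hok2 := hok'.2
      rw [okW_append] at hok2
      obtain ⟨b, hb⟩ := lastV_latent hlat2 m
      have hthru2 : thruL G m b := chainFwd R2 m b hok2.1
        (fun p hp => ⟨hR2 p hp, hlat2 p hp⟩) hb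
      rw [hb] at hok2
      exact ⟨m, a, b, hthru1, hav, hthru2, hok2.2.1⟩
  | bwd =>
    have hR2nil : R2 = [] := by
      cases hR2e : R2 with
      | nil => rfl
      | cons a b => exact absurd (hR2k (by simp [hR2e])) (by simp)
    subst hR2nil
    cases R1 with
    | nil =>
      simp only [List.append_nil, List.nil_append] at hok ⊢
      exact ⟨.bwd, Or.inl hok.1, by simp, by simp⟩
    | cons q R1'' =>
      obtain ⟨t₁, y₁⟩ := q
      have ht₁ : t₁ = .bwd := hR1 (t₁, y₁) (by simp)
      obtain ⟨a, rfl⟩ := hlat1 (t₁, y₁) (by simp)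
      subst ht₁
      refine ⟨.bwd, ?_, by simp, by simp⟩
      have hre : ((StepKind.bwd, Sum.inr a) :: R1'') ++ [] ++ [(StepKind.bwd, Sum.inl w)] =
          (StepKind.bwd, Sum.inr a) :: (R1'' ++ [(StepKind.bwd, Sum.inl w)]) := by simp
      rw [hre] at hok
      obtain ⟨hav, hok'⟩ := hok
      rw [okW_append] at hok'
      obtain ⟨m, hm⟩ := lastV_latent
        (fun p hp => hlat1 p (List.mem_cons_of_mem _ hp)) a
      have hthru1 : thruL G m a := chainBwd R1'' a m hok'.1
        (fun p hp => ⟨hR1 p (List.mem_cons_of_mem _ hp),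
          hlat1 p (List.mem_cons_of_mem _ hp)⟩) hm
      rw [hm] at hok'
      exact Or.inr ⟨m, a, hok'.2.1, hthru1, hav⟩

lemma desc_project {G : MixedGraph (O ⊕ H)} {v b : O}
    (h : G.descends (Sum.inl v) (Sum.inl b)) : (latentProj G).descends v b := by
  have key : ∀ y : O ⊕ H, G.descends y (Sum.inl b) →
      (∀ v', y = Sum.inl v' → (latentProj G).descends v' b) ∧
      (∀ l, y = Sum.inr l → ∃ (b' : H) (w : O), thruL G l b' ∧
        G.dir (Sum.inr b') (Sum.inl w) ∧ (latentProj G).descends w b) := by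
    intro y h
    induction h using Relation.ReflTransGen.head_induction_on with
    | refl =>
      refine ⟨?_, ?_⟩
      · intro v' hv
        cases Sum.inl.inj hv
        exact Relation.ReflTransGen.refl
      · intro l hl
        exact absurd hl (by simp)
    | @head x z hxz _ ih =>
      constructor
      · intro v' hx
        subst hx
        cases z with
        | inl w' =>
          exact Relation.ReflTransGen.head (Or.inl hxz) (ih.1 w' rfl)
        | inr l =>
          obtain ⟨b', w, ht, hd, hdesc⟩ := ih.2 l rfl
          exact Relation.ReflTransGen.head (Or.inr ⟨l, b', hxz, ht, hd⟩) hdesc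
      · intro l hx
        subst hx
        cases z with
        | inl w' =>
          exact ⟨l, w', Relation.ReflTransGen.refl, hxz, ih.1 w' rfl⟩
        | inr l' =>
          obtain ⟨b', w, ht, hd, hdesc⟩ := ih.2 l' rfl
          exact ⟨b', w, Relation.ReflTransGen.head hxz ht, hd, hdesc⟩
  exact (key _ h).1 v rfl

lemma phase2 {G : MixedGraph (O ⊕ H)} {B : Set O} (hbi : ∀ u v, ¬ G.bi u v) :
    ∀ n (Lw : List (StepKind × (O ⊕ H))), Lw.length ≤ n →
      ∀ (v : O) (sG sP : StepKind), (sG.headRight ↔ sP.headRight) →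
        actF G (Sum.inl '' B) sG (Sum.inl v) Lw →
        List.Chain' NLCrel Lw →
        ∀ c, lastV (Sum.inl v : O ⊕ H) Lw = Sum.inl c →
        ∃ M, actF (latentProj G) B sP v M ∧ lastV v M = c ∧ (M = [] ↔ Lw = []) := by
  intro n
  induction n with
  | zero =>
    intro Lw hl v sG sP hR hact hch c hlast
    have hnil : Lw = [] := List.eq_nil_of_length_eq_zero (Nat.le_zero.1 hl)
    subst hnil
    exact ⟨[], actF_nil, Sum.inl.inj hlast, by simp⟩
  | succ n ih =>
    intro Lw hl v sG sP hR hact hch c hlast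
    by_cases hLw : Lw = []
    · subst hLw
      exact ⟨[], actF_nil, Sum.inl.inj hlast, by simp⟩
    · obtain ⟨R, k, w, L2, heq, hlat⟩ := firstObs Lw (Sum.inl v) hLw hlast
      subst heq
      have hre : R ++ (k, Sum.inl w) :: L2 = (R ++ [(k, Sum.inl w)]) ++ L2 := by simp
      rw [hre] at hact hch hlast hl
      have hact1 := (actF_append _ _).1 hact
      have hactR := hact1.1
      have hactL2 := hact1.2
      rw [lastK_concat, lastV_concat] at hactL2
      have hchR : List.Chain' NLCrel (R ++ [(k, Sum.inl w)]) :=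
        (List.isChain_append.1 hch).1
      have hchL2 : List.Chain' NLCrel L2 := (List.isChain_append.1 hch).2.1
      have hnbR : ∀ p ∈ R ++ [(k, Sum.inl w)], p.1 ≠ .bidir :=
        fun p hp => actF_no_bidir hbi hactR p hp
      obtain ⟨T, hT, hTl, hTr⟩ := runEdge (actF_okW hactR) hlat hchR hnbR
      have hint : intOK G (Sum.inl '' B) sG
          (match R with | [] => k | p :: _ => p.1) (Sum.inl v) := by
        cases R with
        | nil => exact hactR.2.1
        | cons p R' =>
          obtain ⟨t₀, y₀⟩ := p
          exact hactR.2.1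
      have hintP : intOK (latentProj G) B sP T v := by
        constructor
        · intro hc
          obtain ⟨b, hbB, hd⟩ := hint.1 ⟨hR.2 hc.1, hTl.1 hc.2⟩
          obtain ⟨b₀, hb₀, hbeq⟩ := hbB
          refine ⟨b₀, hb₀, desc_project ?_⟩
          rw [hbeq]
          exact hd
        · intro hnc hvB
          exact hint.2 (fun hc => hnc ⟨hR.1 hc.1, hTl.2 hc.2⟩) ⟨v, hvB, rfl⟩
      have hlast2 : lastV (Sum.inl w : O ⊕ H) L2 = Sum.inl c := by
        rw [lastV_append, lastV_concat] at hlast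
        exact hlast
      obtain ⟨M2, hM2act, hM2last, hM2nil⟩ := ih L2 (by simp at hl; omega) w k T
        hTr.symm hactL2 hchL2 c hlast2
      refine ⟨(T, w) :: M2, ⟨hT, hintP, hM2act⟩, ?_, by simp⟩
      rw [lastV_cons]
      exact hM2last

lemma aconn_project {G : MixedGraph (O ⊕ H)} {B : Set O} (hbi : ∀ u v, ¬ G.bi u v)
    {a c : O} (h : AConn G (Sum.inl '' B) (Sum.inl a) (Sum.inl c)) :
    AConn (latentProj G) B a c := by
  obtain ⟨Lw, hne, hact, hlast⟩ := h
  obtain ⟨L', hact', hlast', hch', _, hnil'⟩ := phase1 Lw .bwd (Sum.inl a) hact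
  rw [hlast] at hlast'
  obtain ⟨M, hMact, hMlast, hMnil⟩ :=
    phase2 hbi L'.length L' le_rfl a .bwd .bwd Iff.rfl hact' hch' c hlast'
  exact ⟨M, fun hM => hne (hnil'.1 (hMnil.1 hM)), hMact, hMlast⟩

end Projection

end DSP

/-- d-separation in a DAG over `V ⊕ L` of sets of observed nodes is
equivalent to m-separation in the latent projection onto `V`. -/
theorem stmt4 {V L : Type*} [Fintype V] [Fintype L]
    (G : MixedGraph (V ⊕ L)) (hacyc : G.Acyclic) (hbi : ∀ u v, ¬ G.bi u v)
    (A B C : Set V) (hAB : Disjoint A B) (hAC : Disjoint A C) (hBC : Disjoint B C) :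
    G.MSep (Sum.inl '' A) (Sum.inl '' C) (Sum.inl '' B) ↔
      (latentProj G).MSep A C B := by
  have hinj : Function.Injective (Sum.inl : V → V ⊕ L) := Sum.inl_injective
  rw [DSP.msep_iff_no_aconn ((Set.disjoint_image_iff hinj).2 hAB)
        ((Set.disjoint_image_iff hinj).2 hAC),
      DSP.msep_iff_no_aconn hAB hAC]
  constructor
  · intro h a ha c hc hconn
    exact h _ ⟨a, ha, rfl⟩ _ ⟨c, hc, rfl⟩ (DSP.aconn_lift hconn)
  · rintro h x ⟨a, ha, rfl⟩ y ⟨c, hc, rfl⟩ hconn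
    exact h a ha c hc (DSP.aconn_project hbi hconn)
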